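/- Let d ≥ 7 be an integer. There exists a constant C = C(d) > 0 such that for all v, w ∈ ℤ^d: the function x ↦ ⟨v−x⟩^(4−d) · ⟨x−w⟩^(2−d) is summable over ℤ^d and ∑'_{x ∈ ℤ^d} ⟨v−x⟩^(4−d) · ⟨x−w⟩^(2−d) ≤ C · ⟨v−w⟩^(6−d). -/

import Mathlib

/-- Euclidean norm of a lattice point of `ℤ^d`. -/
noncomputable def euclNorm {d : ℕ} (x : Fin d → ℤ) : ℝ :=
  Real.sqrt (∑ i, ((x i : ℝ)) ^ 2)

/-- The "Japanese bracket" `⟨x⟩ = ‖x‖ + 1`. -/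
noncomputable def jap {d : ℕ} (x : Fin d → ℤ) : ℝ := euclNorm x + 1

/-- Sup norm of a lattice point of `ℤ^d`. -/
noncomputable def supNorm {d : ℕ} (x : Fin d → ℤ) : ℝ :=
  ((Finset.univ.sup (fun i => (x i).natAbs) : ℕ) : ℝ)

/-- The sup-norm box `B_y(M)` of radius `M` centred at `y`. -/
def latBox {d : ℕ} (y : Fin d → ℤ) (M : ℝ) : Set (Fin d → ℤ) :=
  {x | supNorm (x - y) ≤ M}

/-- The inner vertex boundary `∂B_y(M)` of the box `B_y(M)`. -/
def latBdry {d : ℕ} (y : Fin d → ℤ) (M : ℝ) : Set (Fin d → ℤ) :=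
  {x | x ∈ latBox y M ∧ ∃ x', x' ∉ latBox y M ∧ (∑ i, |x i - x' i|) = 1}


open scoped ENNReal

private def Nn {d : ℕ} (x : Fin d → ℤ) : ℕ := Finset.univ.sup fun i => (x i).natAbs

private lemma Nn_le_iff {d : ℕ} (x : Fin d → ℤ) (m : ℕ) :
    Nn x ≤ m ↔ ∀ i, (x i).natAbs ≤ m := by
  simp [Nn, Finset.sup_le_iff]

private lemma natAbs_le_Nn {d : ℕ} (x : Fin d → ℤ) (i : Fin d) : (x i).natAbs ≤ Nn x :=
  Finset.le_sup (f := fun i => (x i).natAbs) (Finset.mem_univ i)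

private lemma Nn_neg {d : ℕ} (x : Fin d → ℤ) : Nn (-x) = Nn x := by
  simp [Nn]

private lemma Nn_triangle {d : ℕ} (x y : Fin d → ℤ) : Nn (x + y) ≤ Nn x + Nn y := by
  rw [Nn_le_iff]
  intro i
  calc ((x + y) i).natAbs = (x i + y i).natAbs := by simp
    _ ≤ (x i).natAbs + (y i).natAbs := Int.natAbs_add_le _ _
    _ ≤ Nn x + Nn y := Nat.add_le_add (natAbs_le_Nn x i) (natAbs_le_Nn y i)

private lemma Nn_le_eucl {d : ℕ} (x : Fin d → ℤ) : (Nn x : ℝ) ≤ euclNorm x := by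
  rcases Nat.eq_zero_or_pos d with hd | hd
  · subst hd
    have : Nn x = 0 := by simp [Nn]
    rw [this, euclNorm]
    simpa using Real.sqrt_nonneg _
  · haveI : Nonempty (Fin d) := ⟨⟨0, hd⟩⟩
    obtain ⟨i, -, hi⟩ := Finset.exists_mem_eq_sup Finset.univ
      Finset.univ_nonempty (fun i => (x i).natAbs)
    rw [euclNorm]
    have h1 : ((Nn x : ℝ)) ^ 2 ≤ ∑ j, ((x j : ℝ)) ^ 2 := by
      have : ((Nn x : ℝ)) ^ 2 = ((x i : ℝ)) ^ 2 := by
        rw [Nn, hi]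
        push_cast [Nat.cast_natAbs]
        rw [sq_abs]
      rw [this]
      exact Finset.single_le_sum (f := fun j => ((x j:ℝ))^2) (fun j _ => sq_nonneg _) (Finset.mem_univ i)
    calc (Nn x : ℝ) = Real.sqrt ((Nn x:ℝ)^2) := by rw [Real.sqrt_sq (by positivity)]
      _ ≤ _ := Real.sqrt_le_sqrt h1

private lemma eucl_le_Nn {d : ℕ} (x : Fin d → ℤ) : euclNorm x ≤ d * Nn x := by
  rw [euclNorm]
  have h1 : ∑ j, ((x j : ℝ)) ^ 2 ≤ (d * Nn x : ℝ)^2 := by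
    calc ∑ j, ((x j : ℝ)) ^ 2 ≤ ∑ _j : Fin d, ((Nn x : ℝ))^2 := by
          apply Finset.sum_le_sum
          intro j _
          have h2 : |((x j : ℝ))| ≤ (Nn x : ℝ) := by
            rw [← Int.cast_abs]
            exact_mod_cast Int.ofNat_le.mpr (natAbs_le_Nn x j) |>.trans_eq' (by
              rw [Int.abs_eq_natAbs])
          calc ((x j:ℝ))^2 = |((x j:ℝ))|^2 := (sq_abs _).symm
            _ ≤ _ := by apply pow_le_pow_left₀ (abs_nonneg _) h2
      _ = d * ((Nn x:ℝ))^2 := by simp [Finset.sum_const]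
      _ ≤ (d:ℝ)^2 * (Nn x:ℝ)^2 := by
          apply mul_le_mul_of_nonneg_right _ (by positivity)
          exact_mod_cast Nat.le_self_pow (by norm_num) d
      _ = (d * Nn x:ℝ)^2 := by ring
  calc Real.sqrt (∑ j, ((x j:ℝ))^2) ≤ Real.sqrt ((d * Nn x:ℝ)^2) := Real.sqrt_le_sqrt h1
    _ = _ := Real.sqrt_sq (by positivity)

-- box and counting
private noncomputable def box {d : ℕ} (c : Fin d → ℤ) (m : ℕ) : Finset (Fin d → ℤ) :=
  Finset.Icc (fun i => c i - m) (fun i => c i + m)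

private lemma mem_box {d : ℕ} (c : Fin d → ℤ) (m : ℕ) (x : Fin d → ℤ) :
    x ∈ box c m ↔ Nn (x - c) ≤ m := by
  rw [box, Finset.mem_Icc, Nn_le_iff]
  simp only [Pi.le_def, Pi.sub_apply]
  constructor
  · rintro ⟨h1, h2⟩ i
    have := h1 i; have := h2 i
    omega
  · intro h
    constructor <;> intro i <;> have := h i <;> omega

private lemma card_box {d : ℕ} (c : Fin d → ℤ) (m : ℕ) :
    (box c m).card = (2 * m + 1) ^ d := by
  rw [box, Pi.card_Icc]
  have : ∀ i : Fin d, (Finset.Icc (c i - (m:ℤ)) (c i + m)).card = 2 * m + 1 := by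
    intro i; rw [Int.card_Icc]; omega
  simp [this]

private lemma pow_add_le (b c n : ℕ) : (b+c)^(n+1) ≤ b^(n+1) + (n+1)*c*(b+c)^n := by
  induction n with
  | zero => simp
  | succ n ih =>
    calc (b+c)^(n+2) = (b+c)*(b+c)^(n+1) := by ring
      _ ≤ (b+c)*(b^(n+1) + (n+1)*c*(b+c)^n) := Nat.mul_le_mul_left _ ih
      _ = b*b^(n+1) + c*b^(n+1) + (n+1)*c*((b+c)*(b+c)^n) := by ring
      _ ≤ b^(n+2) + c*(b+c)^(n+1) + (n+1)*c*(b+c)^(n+1) := by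
          have h1 : b^(n+1) ≤ (b+c)^(n+1) := Nat.pow_le_pow_left (by omega) _
          have h2 : b*b^(n+1) = b^(n+2) := by ring
          have h3 : (b+c)*(b+c)^n = (b+c)^(n+1) := by ring
          rw [h2, h3]
          have := Nat.mul_le_mul_left c h1
          omega
      _ = b^(n+2) + (n+2)*c*(b+c)^(n+1) := by ring

private lemma shell_bound (d k : ℕ) :
    (2*(k+1)+1)^d - (2*k+1)^d ≤ d * 2^d * (k+2)^(d-1) := by
  match d with
  | 0 => simp
  | e+1 =>
    have h := pow_add_le (2*k+1) 2 e
    have h2 : (2*k+1+2) = 2*(k+1)+1 := by ring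
    rw [h2] at h
    have h3 : (2*(k+1)+1)^e ≤ 2^e*(k+2)^e := by
      calc (2*(k+1)+1)^e ≤ (2*(k+2))^e := Nat.pow_le_pow_left (by omega) _
        _ = 2^e*(k+2)^e := Nat.mul_pow _ _ _
    have h4 : (e+1)*2*(2*(k+1)+1)^e ≤ (e+1)*2*(2^e*(k+2)^e) := Nat.mul_le_mul_left _ h3
    have h5 : (e+1)*2*(2^e*(k+2)^e) = (e+1) * 2^(e+1) * (k+2)^(e+1-1) := by
      simp only [Nat.add_sub_cancel]
      rw [pow_succ]; ring
    omega

private lemma master {d : ℕ} (hd : 1 ≤ d) (c : Fin d → ℤ) (h : ℕ → ℝ≥0∞) :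
    ∑' x : Fin d → ℤ, h (Nn (x - c)) ≤
      (d * 2^d : ℕ) * ∑' m : ℕ, ((m:ℝ≥0∞)+1)^(d-1) * h m := by
  have key : ∀ m : ℕ, (∑' x : Fin d → ℤ, if m = Nn (x - c) then h m else 0) ≤
      ((d * 2^d : ℕ) : ℝ≥0∞) * ((m:ℝ≥0∞)+1)^(d-1) * h m := by
    intro m
    -- choose covering finset
    obtain ⟨S, hS, hcard⟩ : ∃ S : Finset (Fin d → ℤ),
        (∀ x : Fin d → ℤ, m = Nn (x - c) → x ∈ S) ∧ S.card ≤ d * 2^d * (m+1)^(d-1) := by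
      match m with
      | 0 =>
        refine ⟨box c 0, fun x hx => (mem_box c 0 x).2 (le_of_eq hx.symm), ?_⟩
        rw [card_box]
        calc (2*0+1)^d = 1 := by norm_num
          _ ≤ d * 2^d * (0+1)^(d-1) := by
              have h1 : 1 ≤ 2^d := Nat.one_le_two_pow
              have : (0+1 : ℕ)^(d-1) = 1 := one_pow _
              rw [this]
              nlinarith
      | k+1 =>
        refine ⟨box c (k+1) \ box c k, ?_, ?_⟩
        · intro x hx
          rw [Finset.mem_sdiff, mem_box, mem_box]
          omega
        · rw [Finset.card_sdiff_of_subset (by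
            intro x hx
            rw [mem_box] at hx ⊢
            omega)]
          rw [card_box, card_box]
          exact shell_bound d k
    calc (∑' x : Fin d → ℤ, if m = Nn (x - c) then h m else 0)
        = ∑ x ∈ S, (if m = Nn (x - c) then h m else 0) := by
          apply tsum_eq_sum
          intro x hx
          rw [if_neg]
          intro hc
          exact hx (hS x hc)
      _ ≤ ∑ _x ∈ S, h m := Finset.sum_le_sum (fun x _ => by split <;> simp)
      _ = S.card * h m := by rw [Finset.sum_const, nsmul_eq_mul]
      _ ≤ ((d * 2^d * (m+1)^(d-1) : ℕ) : ℝ≥0∞) * h m := by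
          apply mul_le_mul_left (by exact_mod_cast Nat.cast_le.mpr hcard)
      _ = ((d * 2^d : ℕ) : ℝ≥0∞) * ((m:ℝ≥0∞)+1)^(d-1) * h m := by
          push_cast
          ring
  calc ∑' x : Fin d → ℤ, h (Nn (x - c))
      = ∑' x : Fin d → ℤ, ∑' m : ℕ, (if m = Nn (x - c) then h m else 0) := by
        apply tsum_congr
        intro x
        rw [eq_comm]
        have : ∀ m : ℕ, (if m = Nn (x-c) then h m else 0) = (if m = Nn (x-c) then h (Nn (x-c)) else 0) := by
          intro m; split_ifs with hm
          · rw [hm]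
          · rfl
        rw [tsum_congr this]
        exact tsum_ite_eq (Nn (x-c)) (fun _ => h (Nn (x-c)))
    _ = ∑' m : ℕ, ∑' x : Fin d → ℤ, (if m = Nn (x - c) then h m else 0) := ENNReal.tsum_comm
    _ ≤ ∑' m : ℕ, ((d * 2^d : ℕ) : ℝ≥0∞) * (((m:ℝ≥0∞)+1)^(d-1) * h m) := by
        apply ENNReal.tsum_le_tsum
        intro m
        calc _ ≤ _ := key m
          _ = _ := by ring
    _ = _ := ENNReal.tsum_mul_left

private lemma ball_nat (t n : ℕ) :
    ∑' m : ℕ, (if 2*m ≤ n then ((m:ℝ≥0∞)+1)^t else 0) ≤ ((n:ℝ≥0∞)+1)^(t+1) := by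
  have h1 : (∑' m : ℕ, (if 2*m ≤ n then ((m:ℝ≥0∞)+1)^t else 0)) =
      ∑ m ∈ Finset.range (n+1), (if 2*m ≤ n then ((m:ℝ≥0∞)+1)^t else 0) := by
    apply tsum_eq_sum
    intro m hm
    rw [Finset.mem_range] at hm
    rw [if_neg]; omega
  rw [h1]
  calc _ ≤ ∑ _m ∈ Finset.range (n+1), ((n:ℝ≥0∞)+1)^t := by
        apply Finset.sum_le_sum
        intro m hm
        rw [Finset.mem_range] at hm
        split_ifs
        · exact pow_le_pow_left' (by exact_mod_cast add_le_add_left (Nat.cast_le.mpr (by omega)) 1) t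
        · exact zero_le'
    _ = ((n:ℝ≥0∞)+1)^(t+1) := by
        rw [Finset.sum_const, Finset.card_range, nsmul_eq_mul, pow_succ]
        push_cast
        ring

private lemma real_tail (M : ℕ) : ∀ k : ℕ,
    (∑ m ∈ Finset.range k, (if M ≤ m then 1/((m:ℝ)+1)^2 else 0)) ≤
      2/((M:ℝ)+1) - 2/(((max k M : ℕ):ℝ)+1) := by
  intro k
  induction k with
  | zero => simp
  | succ k ih =>
    rw [Finset.sum_range_succ]
    by_cases hk : M ≤ k
    · rw [if_pos hk]
      rw [max_eq_left hk] at ih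
      rw [max_eq_left (by omega : M ≤ k+1)]
      have hk1 : (0:ℝ) < (k:ℝ)+1 := by positivity
      have key : 1/((k:ℝ)+1)^2 ≤ 2/((k:ℝ)+1) - 2/((k:ℝ)+1+1) := by
        rw [div_sub_div _ _ (ne_of_gt hk1) (by positivity)]
        rw [div_le_div_iff₀ (by positivity) (by positivity)]
        nlinarith
      push_cast
      push_cast at ih
      linarith
    · rw [if_neg hk]
      rw [max_eq_right (by omega : k ≤ M)] at ih
      rw [max_eq_right (by omega : k+1 ≤ M)]
      simpa using ih

private lemma tail_sq (M : ℕ) :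
    ∑' m : ℕ, (if M ≤ m then (((m:ℝ≥0∞)+1)^2)⁻¹ else 0) ≤ 2 * ((M:ℝ≥0∞)+1)⁻¹ := by
  rw [ENNReal.tsum_eq_iSup_nat]
  apply iSup_le
  intro k
  have heq : (∑ m ∈ Finset.range k, (if M ≤ m then (((m:ℝ≥0∞)+1)^2)⁻¹ else 0)) =
      ENNReal.ofReal (∑ m ∈ Finset.range k, (if M ≤ m then 1/((m:ℝ)+1)^2 else 0)) := by
    rw [ENNReal.ofReal_sum_of_nonneg]
    · apply Finset.sum_congr rfl
      intro m _
      split_ifs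
      · rw [one_div, ENNReal.ofReal_inv_of_pos (by positivity), ENNReal.ofReal_pow (by positivity)]
        congr 2
        rw [ENNReal.ofReal_add (by positivity) (by norm_num), ENNReal.ofReal_natCast, ENNReal.ofReal_one]
      · simp
    · intro m _
      split_ifs
      · positivity
      · exact le_rfl
  rw [heq]
  calc ENNReal.ofReal _ ≤ ENNReal.ofReal (2/((M:ℝ)+1)) := by
        apply ENNReal.ofReal_le_ofReal
        have := real_tail M k
        have h2 : (0:ℝ) ≤ 2/(((max k M : ℕ):ℝ)+1) := by positivity
        linarith
    _ ≤ 2 * ((M:ℝ≥0∞)+1)⁻¹ := by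
        rw [ENNReal.ofReal_div_of_pos (by positivity), div_eq_mul_inv]
        apply mul_le_mul'
        · norm_num
        · rw [ENNReal.ofReal_add (by positivity) (by norm_num), ENNReal.ofReal_natCast, ENNReal.ofReal_one]

private lemma epos (m : ℕ) : ((m:ℝ≥0∞)+1) ≠ 0 := by simp
private lemma etop (m : ℕ) : ((m:ℝ≥0∞)+1) ≠ ⊤ := by
  exact ENNReal.add_ne_top.2 ⟨ENNReal.natCast_ne_top m, ENNReal.one_ne_top⟩

private lemma inv_pow_add {x : ℝ≥0∞} (hx0 : x ≠ 0) (hxt : x ≠ ⊤) (a b : ℕ) :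
    (x^(a+b))⁻¹ = (x^a)⁻¹ * (x^b)⁻¹ := by
  rw [pow_add, ENNReal.mul_inv (Or.inl (pow_ne_zero a hx0)) (Or.inl (ENNReal.pow_ne_top hxt))]

private lemma pow_mul_inv_pow {x : ℝ≥0∞} (hx0 : x ≠ 0) (hxt : x ≠ ⊤) (a b : ℕ) :
    x^(a+b) * (x^b)⁻¹ = x^a := by
  rw [pow_add, mul_assoc, ENNReal.mul_inv_cancel (pow_ne_zero b hx0) (ENNReal.pow_ne_top hxt),
    mul_one]

private lemma pow_mul_inv_pow_add {x : ℝ≥0∞} (hx0 : x ≠ 0) (hxt : x ≠ ⊤) (a b : ℕ) :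
    x^a * (x^(a+b))⁻¹ = (x^b)⁻¹ := by
  rw [inv_pow_add hx0 hxt a b, ← mul_assoc,
    ENNReal.mul_inv_cancel (pow_ne_zero a hx0) (ENNReal.pow_ne_top hxt), one_mul]

private lemma inv_pow_bound {A B c : ℝ≥0∞} (hc0 : c ≠ 0) (hct : c ≠ ⊤)
    (h : B ≤ c * A) (p : ℕ) :
    (A^p)⁻¹ ≤ c^p * (B^p)⁻¹ := by
  have h1 : B^p ≤ c^p * A^p := by
    calc B^p ≤ (c*A)^p := pow_le_pow_left' h p
      _ = c^p * A^p := mul_pow c A p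
  have h2 : (c^p * A^p)⁻¹ ≤ (B^p)⁻¹ := ENNReal.inv_le_inv.2 h1
  have h3 : (c^p * A^p)⁻¹ = (c^p)⁻¹ * (A^p)⁻¹ :=
    ENNReal.mul_inv (Or.inl (pow_ne_zero p hc0)) (Or.inl (ENNReal.pow_ne_top hct))
  calc (A^p)⁻¹ = c^p * ((c^p)⁻¹ * (A^p)⁻¹) := by
        rw [← mul_assoc, ENNReal.mul_inv_cancel (pow_ne_zero p hc0) (ENNReal.pow_ne_top hct),
          one_mul]
    _ = c^p * (c^p * A^p)⁻¹ := by rw [h3]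
    _ ≤ c^p * (B^p)⁻¹ := mul_le_mul_right h2 _

private lemma cast_le_mul (p q c : ℕ) (h : p+1 ≤ c*(q+1)) :
    ((p:ℝ≥0∞)+1) ≤ (c:ℝ≥0∞)*((q:ℝ≥0∞)+1) := by
  have := Nat.cast_le (α := ℝ≥0∞) |>.2 h
  push_cast at this
  convert this using 1

-- the three one-dimensional shell sums
private lemma sumH1 {d : ℕ} (hd : 7 ≤ d) (n : ℕ) :
    ∑' m : ℕ, ((m:ℝ≥0∞)+1)^(d-1) *
      (if 2*m ≤ n then (((m:ℝ≥0∞)+1)^(d-2))⁻¹ else 0) ≤ ((n:ℝ≥0∞)+1)^2 := by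
  have h1 : ∀ m : ℕ, ((m:ℝ≥0∞)+1)^(d-1) *
      (if 2*m ≤ n then (((m:ℝ≥0∞)+1)^(d-2))⁻¹ else 0)
      = if 2*m ≤ n then ((m:ℝ≥0∞)+1)^1 else 0 := by
    intro m
    split_ifs
    · rw [show d-1 = 1+(d-2) by omega]
      exact pow_mul_inv_pow (epos m) (etop m) 1 (d-2)
    · rw [mul_zero]
  rw [tsum_congr h1]
  simpa using ball_nat 1 n

private lemma sumH2 {d : ℕ} (hd : 7 ≤ d) (n : ℕ) :
    ∑' m : ℕ, ((m:ℝ≥0∞)+1)^(d-1) *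
      (if 2*m ≤ n then (((m:ℝ≥0∞)+1)^(d-4))⁻¹ else 0) ≤ ((n:ℝ≥0∞)+1)^4 := by
  have h1 : ∀ m : ℕ, ((m:ℝ≥0∞)+1)^(d-1) *
      (if 2*m ≤ n then (((m:ℝ≥0∞)+1)^(d-4))⁻¹ else 0)
      = if 2*m ≤ n then ((m:ℝ≥0∞)+1)^3 else 0 := by
    intro m
    split_ifs
    · rw [show d-1 = 3+(d-4) by omega]
      exact pow_mul_inv_pow (epos m) (etop m) 3 (d-4)
    · rw [mul_zero]
  rw [tsum_congr h1]
  simpa using ball_nat 3 n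

private lemma sumH3 {d : ℕ} (hd : 7 ≤ d) (n : ℕ) :
    ∑' m : ℕ, ((m:ℝ≥0∞)+1)^(d-1) *
      (if n < 2*m then (3:ℝ≥0∞)^(d-4) * (((m:ℝ≥0∞)+1)^(2*d-6))⁻¹ else 0)
      ≤ 3^(d-4) * 2^(d-5) * ((((n:ℝ≥0∞)+1)^(d-7))⁻¹ * (((n:ℝ≥0∞)+1))⁻¹) := by
  have h1 : ∀ m : ℕ, ((m:ℝ≥0∞)+1)^(d-1) *
      (if n < 2*m then (3:ℝ≥0∞)^(d-4) * (((m:ℝ≥0∞)+1)^(2*d-6))⁻¹ else 0)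
      ≤ (3^(d-4) * (2^(d-7) * (((n:ℝ≥0∞)+1)^(d-7))⁻¹)) *
          (if n/2+1 ≤ m then ((((m:ℝ≥0∞)+1))^2)⁻¹ else 0) := by
    intro m
    rcases lt_or_ge n (2*m) with h | h
    · rw [if_pos h, if_pos (by omega)]
      have e1 : ((m:ℝ≥0∞)+1)^(d-1) * ((3:ℝ≥0∞)^(d-4) * ((((m:ℝ≥0∞)+1))^(2*d-6))⁻¹)
          = 3^(d-4) * ((((m:ℝ≥0∞)+1))^(d-5))⁻¹ := by
        calc ((m:ℝ≥0∞)+1)^(d-1) * ((3:ℝ≥0∞)^(d-4) * ((((m:ℝ≥0∞)+1))^(2*d-6))⁻¹)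
            = 3^(d-4) * (((m:ℝ≥0∞)+1)^(d-1) * ((((m:ℝ≥0∞)+1))^((d-1)+(d-5)))⁻¹) := by
              rw [show 2*d-6 = (d-1)+(d-5) by omega]; ring
          _ = 3^(d-4) * ((((m:ℝ≥0∞)+1))^(d-5))⁻¹ := by
              rw [pow_mul_inv_pow_add (epos m) (etop m) (d-1) (d-5)]
      rw [e1, show d-5 = (d-7)+2 by omega, inv_pow_add (epos m) (etop m) (d-7) 2]
      have e2 : ((((m:ℝ≥0∞)+1))^(d-7))⁻¹ ≤ 2^(d-7) * ((((n:ℝ≥0∞)+1))^(d-7))⁻¹ := by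
        apply inv_pow_bound (by norm_num) (by norm_num) _ (d-7)
        have := cast_le_mul n m 2 (by omega)
        simpa using this
      calc 3^(d-4) * (((((m:ℝ≥0∞)+1))^(d-7))⁻¹ * ((((m:ℝ≥0∞)+1))^2)⁻¹)
          ≤ 3^(d-4) * ((2^(d-7) * ((((n:ℝ≥0∞)+1))^(d-7))⁻¹) * ((((m:ℝ≥0∞)+1))^2)⁻¹) := by
            exact mul_le_mul_right (mul_le_mul_left e2 _) _
        _ = (3^(d-4) * (2^(d-7) * ((((n:ℝ≥0∞)+1))^(d-7))⁻¹)) * ((((m:ℝ≥0∞)+1))^2)⁻¹ := by ring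
    · rw [if_neg (by omega), if_neg (by omega), mul_zero, mul_zero]
  calc _ ≤ ∑' m : ℕ, (3^(d-4) * (2^(d-7) * (((n:ℝ≥0∞)+1)^(d-7))⁻¹)) *
        (if n/2+1 ≤ m then ((((m:ℝ≥0∞)+1))^2)⁻¹ else 0) :=
        ENNReal.tsum_le_tsum h1
    _ = (3^(d-4) * (2^(d-7) * (((n:ℝ≥0∞)+1)^(d-7))⁻¹)) *
        ∑' m : ℕ, (if n/2+1 ≤ m then ((((m:ℝ≥0∞)+1))^2)⁻¹ else 0) := ENNReal.tsum_mul_left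
    _ ≤ (3^(d-4) * (2^(d-7) * (((n:ℝ≥0∞)+1)^(d-7))⁻¹)) * (2 * (((n/2+1 : ℕ):ℝ≥0∞)+1)⁻¹) :=
        mul_le_mul_right (tail_sq (n/2+1)) _
    _ ≤ (3^(d-4) * (2^(d-7) * (((n:ℝ≥0∞)+1)^(d-7))⁻¹)) * (2 * (2 * (((n:ℝ≥0∞)+1))⁻¹)) := by
        apply mul_le_mul_right
        apply mul_le_mul_right
        have := inv_pow_bound (A := ((n/2+1 : ℕ):ℝ≥0∞)+1) (B := ((n:ℝ≥0∞)+1)) (c := 2)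
          (by norm_num) (by norm_num) (by
            have := cast_le_mul n (n/2+1) 2 (by omega)
            simpa using this) 1
        simpa using this
    _ = 3^(d-4) * (2^(d-7) * 2 * 2) * ((((n:ℝ≥0∞)+1)^(d-7))⁻¹ * (((n:ℝ≥0∞)+1))⁻¹) := by ring
    _ = 3^(d-4) * 2^(d-5) * ((((n:ℝ≥0∞)+1)^(d-7))⁻¹ * (((n:ℝ≥0∞)+1))⁻¹) := by
        rw [show d-5 = (d-7)+1+1 by omega]
        ring

private lemma core {d : ℕ} (hd : 7 ≤ d) (v w : Fin d → ℤ) :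
    ∑' x : Fin d → ℤ,
      (((Nn (v-x) : ℝ≥0∞)+1)^(d-4) * ((Nn (x-w) : ℝ≥0∞)+1)^(d-2))⁻¹ ≤
    ((d * 2^d : ℕ) : ℝ≥0∞) * (2^(d-4) + 2^(d-2) + 3^(d-4) * 2^(d-5)) *
      (((Nn (v-w) : ℝ≥0∞)+1)^(d-6))⁻¹ := by
  set n := Nn (v - w) with hn
  set En : ℝ≥0∞ := (n:ℝ≥0∞)+1 with hEn
  set D : ℝ≥0∞ := ((d * 2^d : ℕ) : ℝ≥0∞) with hD
  set H1 : ℕ → ℝ≥0∞ := fun m => if 2*m ≤ n then (((m:ℝ≥0∞)+1)^(d-2))⁻¹ else 0 with hH1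
  set H2 : ℕ → ℝ≥0∞ := fun m => if 2*m ≤ n then (((m:ℝ≥0∞)+1)^(d-4))⁻¹ else 0 with hH2
  set H3 : ℕ → ℝ≥0∞ := fun m =>
    if n < 2*m then (3:ℝ≥0∞)^(d-4) * (((m:ℝ≥0∞)+1)^(2*d-6))⁻¹ else 0 with hH3
  -- triangle facts
  have tri1 : ∀ x : Fin d → ℤ, n ≤ Nn (x-v) + Nn (x-w) := by
    intro x
    have h1 := Nn_triangle (v-x) (x-w)
    rw [show v - x + (x-w) = v - w by abel] at h1
    rw [show v - x = -(x-v) by abel, Nn_neg] at h1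
    exact h1
  have tri2 : ∀ x : Fin d → ℤ, Nn (x-w) ≤ Nn (x-v) + n := by
    intro x
    have h1 := Nn_triangle (x-v) (v-w)
    rw [show x - v + (v-w) = x - w by abel] at h1
    exact h1
  -- pointwise bound
  have key : ∀ x : Fin d → ℤ,
      (((Nn (v-x) : ℝ≥0∞)+1)^(d-4) * ((Nn (x-w) : ℝ≥0∞)+1)^(d-2))⁻¹ ≤
        (2^(d-4) * (En^(d-4))⁻¹) * H1 (Nn (x-w))
        + (2^(d-2) * (En^(d-2))⁻¹) * H2 (Nn (x-v))
        + H3 (Nn (x-w)) := by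
    intro x
    have hva : Nn (v-x) = Nn (x-v) := by rw [show v-x = -(x-v) by abel, Nn_neg]
    rw [hva]
    set a := Nn (x-v) with ha
    set b := Nn (x-w) with hb
    have hsplit : ((((a:ℝ≥0∞))+1)^(d-4) * (((b:ℝ≥0∞))+1)^(d-2))⁻¹
        = ((((a:ℝ≥0∞))+1)^(d-4))⁻¹ * ((((b:ℝ≥0∞))+1)^(d-2))⁻¹ :=
      ENNReal.mul_inv (Or.inl (pow_ne_zero _ (epos a))) (Or.inl (ENNReal.pow_ne_top (etop a)))
    rw [hsplit]
    rcases le_or_gt (2*b) n with h1 | h1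
    · -- region 1
      have hbd : ((((a:ℝ≥0∞))+1)^(d-4))⁻¹ ≤ 2^(d-4) * (En^(d-4))⁻¹ := by
        apply inv_pow_bound (by norm_num) (by norm_num) _ (d-4)
        have h3 := tri1 x
        have := cast_le_mul n a 2 (by omega)
        simpa using this
      have : ((((a:ℝ≥0∞))+1)^(d-4))⁻¹ * ((((b:ℝ≥0∞))+1)^(d-2))⁻¹ ≤
          (2^(d-4) * (En^(d-4))⁻¹) * H1 b := by
        rw [hH1]
        simp only [if_pos h1]
        exact mul_le_mul_left hbd _
      exact this.trans (le_self_add.trans le_self_add)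
    · rcases le_or_gt (2*a) n with h2 | h2
      · -- region 2
        have hbd : ((((b:ℝ≥0∞))+1)^(d-2))⁻¹ ≤ 2^(d-2) * (En^(d-2))⁻¹ := by
          apply inv_pow_bound (by norm_num) (by norm_num) _ (d-2)
          have h3 := tri1 x
          have := cast_le_mul n b 2 (by omega)
          simpa using this
        have hle : ((((a:ℝ≥0∞))+1)^(d-4))⁻¹ * ((((b:ℝ≥0∞))+1)^(d-2))⁻¹ ≤
            (2^(d-2) * (En^(d-2))⁻¹) * H2 a := by
          rw [hH2]
          simp only [if_pos h2]
          calc ((((a:ℝ≥0∞))+1)^(d-4))⁻¹ * ((((b:ℝ≥0∞))+1)^(d-2))⁻¹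
              ≤ ((((a:ℝ≥0∞))+1)^(d-4))⁻¹ * (2^(d-2) * (En^(d-2))⁻¹) := mul_le_mul_right hbd _
            _ = (2^(d-2) * (En^(d-2))⁻¹) * ((((a:ℝ≥0∞))+1)^(d-4))⁻¹ := by ring
        exact hle.trans (le_add_self.trans le_self_add)
      · -- region 3
        have hba : ((((a:ℝ≥0∞))+1)^(d-4))⁻¹ ≤ 3^(d-4) * (((b:ℝ≥0∞)+1)^(d-4))⁻¹ := by
          apply inv_pow_bound (by norm_num) (by norm_num) _ (d-4)
          have h3 := tri2 x
          have := cast_le_mul b a 3 (by omega)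
          simpa using this
        have hle : ((((a:ℝ≥0∞))+1)^(d-4))⁻¹ * ((((b:ℝ≥0∞))+1)^(d-2))⁻¹ ≤ H3 b := by
          rw [hH3]
          simp only [if_pos h1]
          calc ((((a:ℝ≥0∞))+1)^(d-4))⁻¹ * ((((b:ℝ≥0∞))+1)^(d-2))⁻¹
              ≤ (3^(d-4) * (((b:ℝ≥0∞)+1)^(d-4))⁻¹) * ((((b:ℝ≥0∞))+1)^(d-2))⁻¹ :=
                mul_le_mul_left hba _
            _ = 3^(d-4) * ((((b:ℝ≥0∞)+1)^(d-4))⁻¹ * (((b:ℝ≥0∞)+1)^(d-2))⁻¹) := by ring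
            _ = 3^(d-4) * (((b:ℝ≥0∞)+1)^(2*d-6))⁻¹ := by
                rw [← inv_pow_add (epos b) (etop b) (d-4) (d-2),
                  show (d-4)+(d-2) = 2*d-6 by omega]
        exact hle.trans le_add_self
  -- sum the three pieces
  have hd1 : 1 ≤ d := by omega
  have piece1 : ∑' x : Fin d → ℤ, (2^(d-4) * (En^(d-4))⁻¹) * H1 (Nn (x-w))
      ≤ D * 2^(d-4) * (En^(d-6))⁻¹ := by
    rw [ENNReal.tsum_mul_left]
    calc (2^(d-4) * (En^(d-4))⁻¹) * ∑' x : Fin d → ℤ, H1 (Nn (x-w))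
        ≤ (2^(d-4) * (En^(d-4))⁻¹) * (D * ∑' m : ℕ, ((m:ℝ≥0∞)+1)^(d-1) * H1 m) :=
          mul_le_mul_right (master hd1 w H1) _
      _ ≤ (2^(d-4) * (En^(d-4))⁻¹) * (D * En^2) := by
          apply mul_le_mul_right
          exact mul_le_mul_right (sumH1 hd n) _
      _ = D * 2^(d-4) * ((En^((d-6)+2))⁻¹ * En^2) := by
          rw [show d-4 = (d-6)+2 by omega]; ring
      _ = D * 2^(d-4) * (En^(d-6))⁻¹ := by
          rw [inv_pow_add (epos n) (etop n) (d-6) 2, mul_assoc ((En^(d-6))⁻¹),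
            ENNReal.inv_mul_cancel (pow_ne_zero _ (epos n)) (ENNReal.pow_ne_top (etop n)),
            mul_one]
  have piece2 : ∑' x : Fin d → ℤ, (2^(d-2) * (En^(d-2))⁻¹) * H2 (Nn (x-v))
      ≤ D * 2^(d-2) * (En^(d-6))⁻¹ := by
    rw [ENNReal.tsum_mul_left]
    calc (2^(d-2) * (En^(d-2))⁻¹) * ∑' x : Fin d → ℤ, H2 (Nn (x-v))
        ≤ (2^(d-2) * (En^(d-2))⁻¹) * (D * ∑' m : ℕ, ((m:ℝ≥0∞)+1)^(d-1) * H2 m) :=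
          mul_le_mul_right (master hd1 v H2) _
      _ ≤ (2^(d-2) * (En^(d-2))⁻¹) * (D * En^4) := by
          apply mul_le_mul_right
          exact mul_le_mul_right (sumH2 hd n) _
      _ = D * 2^(d-2) * ((En^((d-6)+4))⁻¹ * En^4) := by
          rw [show d-2 = (d-6)+4 by omega]; ring
      _ = D * 2^(d-2) * (En^(d-6))⁻¹ := by
          rw [inv_pow_add (epos n) (etop n) (d-6) 4, mul_assoc ((En^(d-6))⁻¹),
            ENNReal.inv_mul_cancel (pow_ne_zero _ (epos n)) (ENNReal.pow_ne_top (etop n)),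
            mul_one]
  have piece3 : ∑' x : Fin d → ℤ, H3 (Nn (x-w))
      ≤ D * (3^(d-4) * 2^(d-5)) * (En^(d-6))⁻¹ := by
    calc ∑' x : Fin d → ℤ, H3 (Nn (x-w))
        ≤ D * ∑' m : ℕ, ((m:ℝ≥0∞)+1)^(d-1) * H3 m := master hd1 w H3
      _ ≤ D * (3^(d-4) * 2^(d-5) * ((En^(d-7))⁻¹ * En⁻¹)) :=
          mul_le_mul_right (sumH3 hd n) _
      _ = D * (3^(d-4) * 2^(d-5)) * (En^((d-7)+1))⁻¹ := by
          rw [inv_pow_add (epos n) (etop n) (d-7) 1, pow_one]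
          ring
      _ = D * (3^(d-4) * 2^(d-5)) * (En^(d-6))⁻¹ := by
          rw [show (d-7)+1 = d-6 by omega]
  calc ∑' x : Fin d → ℤ,
      (((Nn (v-x) : ℝ≥0∞)+1)^(d-4) * ((Nn (x-w) : ℝ≥0∞)+1)^(d-2))⁻¹
      ≤ ∑' x : Fin d → ℤ, ((2^(d-4) * (En^(d-4))⁻¹) * H1 (Nn (x-w))
        + (2^(d-2) * (En^(d-2))⁻¹) * H2 (Nn (x-v))
        + H3 (Nn (x-w))) := ENNReal.tsum_le_tsum key
    _ = (∑' x : Fin d → ℤ, (2^(d-4) * (En^(d-4))⁻¹) * H1 (Nn (x-w)))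
        + (∑' x : Fin d → ℤ, (2^(d-2) * (En^(d-2))⁻¹) * H2 (Nn (x-v)))
        + (∑' x : Fin d → ℤ, H3 (Nn (x-w))) := by
          rw [ENNReal.tsum_add, ENNReal.tsum_add]
    _ ≤ D * 2^(d-4) * (En^(d-6))⁻¹ + D * 2^(d-2) * (En^(d-6))⁻¹
        + D * (3^(d-4) * 2^(d-5)) * (En^(d-6))⁻¹ :=
          add_le_add (add_le_add piece1 piece2) piece3
    _ = D * (2^(d-4) + 2^(d-2) + 3^(d-4) * 2^(d-5)) * (En^(d-6))⁻¹ := by ring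

private lemma eucl_nonneg {d : ℕ} (x : Fin d → ℤ) : 0 ≤ euclNorm x := Real.sqrt_nonneg _

private lemma jap_pos {d : ℕ} (x : Fin d → ℤ) : 0 < jap x := by
  have := eucl_nonneg x
  rw [jap]; linarith

private lemma jap_ge {d : ℕ} (x : Fin d → ℤ) : ((Nn x : ℝ)+1) ≤ jap x := by
  have := Nn_le_eucl x
  rw [jap]; linarith

private lemma jap_le {d : ℕ} (hd : 1 ≤ d) (x : Fin d → ℤ) :
    jap x ≤ d * ((Nn x : ℝ)+1) := by
  have h1 := eucl_le_Nn x
  have h2 : (1:ℝ) ≤ d := by exact_mod_cast hd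
  rw [jap]
  nlinarith [Nat.cast_nonneg (α := ℝ) (Nn x)]

private lemma japrpow {d : ℕ} (y : Fin d → ℤ) (k : ℕ) (hk : k ≤ d) :
    jap y ^ ((k:ℝ) - (d:ℝ)) = (jap y ^ ((d-k:ℕ)))⁻¹ := by
  have h0 : (0:ℝ) < jap y := jap_pos y
  rw [show (k:ℝ) - (d:ℝ) = -(((d-k:ℕ):ℝ)) by push_cast [Nat.cast_sub hk]; ring,
    Real.rpow_neg h0.le, Real.rpow_natCast]

private lemma ofReal_invpow {d : ℕ} (y : Fin d → ℤ) (k : ℕ) :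
    ENNReal.ofReal ((((Nn y : ℝ)+1)^k)⁻¹) = (((Nn y : ℝ≥0∞)+1)^k)⁻¹ := by
  rw [ENNReal.ofReal_inv_of_pos (by positivity), ENNReal.ofReal_pow (by positivity),
    ENNReal.ofReal_add (by positivity) (by norm_num), ENNReal.ofReal_natCast,
    ENNReal.ofReal_one]

theorem stmt12 (d : ℕ) (hd : 7 ≤ d) :
    ∃ C : ℝ, 0 < C ∧
      ∀ v w : Fin d → ℤ,
        Summable (fun x : Fin d → ℤ =>
            jap (v - x) ^ (4 - (d : ℝ)) * jap (x - w) ^ (2 - (d : ℝ))) ∧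
          (∑' x : Fin d → ℤ, jap (v - x) ^ (4 - (d : ℝ)) * jap (x - w) ^ (2 - (d : ℝ))) ≤
            C * jap (v - w) ^ (6 - (d : ℝ)) := by
  have hd1 : 1 ≤ d := by omega
  set K : ℝ≥0∞ := ((d * 2^d : ℕ) : ℝ≥0∞) * (2^(d-4) + 2^(d-2) + 3^(d-4) * 2^(d-5)) with hK
  have hKtop : K ≠ ⊤ := by
    rw [hK]
    apply ENNReal.mul_ne_top (ENNReal.natCast_ne_top _)
    apply ENNReal.add_ne_top.2
    constructor
    · apply ENNReal.add_ne_top.2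
      exact ⟨ENNReal.pow_ne_top (by norm_num), ENNReal.pow_ne_top (by norm_num)⟩
    · exact ENNReal.mul_ne_top (ENNReal.pow_ne_top (by norm_num)) (ENNReal.pow_ne_top (by norm_num))
  set Creal : ℝ := K.toReal with hCreal
  have hCreal0 : 0 ≤ Creal := ENNReal.toReal_nonneg
  refine ⟨Creal * (d:ℝ)^(d-6) + 1, by positivity, ?_⟩
  intro v w
  set n : ℕ := Nn (v - w) with hn
  -- the real term and its properties
  set f : (Fin d → ℤ) → ℝ := fun x => jap (v - x) ^ (4 - (d : ℝ)) * jap (x - w) ^ (2 - (d : ℝ))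
    with hf
  have hf_eq : ∀ x, f x = (jap (v-x) ^ ((d-4:ℕ)))⁻¹ * (jap (x-w) ^ ((d-2:ℕ)))⁻¹ := by
    intro x
    rw [hf]
    simp only
    rw [show (4 - (d:ℝ)) = ((4:ℕ):ℝ) - d by norm_num, show (2 - (d:ℝ)) = ((2:ℕ):ℝ) - d by norm_num,
      japrpow (v-x) 4 (by omega), japrpow (x-w) 2 (by omega)]
  have hf_nonneg : ∀ x, 0 ≤ f x := by
    intro x
    rw [hf_eq]
    have := jap_pos (v-x); have := jap_pos (x-w)
    positivity
  have hf_le : ∀ x, f x ≤ (((Nn (v-x) : ℝ)+1)^(d-4))⁻¹ * (((Nn (x-w) : ℝ)+1)^(d-2))⁻¹ := by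
    intro x
    rw [hf_eq]
    have h1 : (0:ℝ) < ((Nn (v-x) : ℝ)+1)^(d-4) := by positivity
    have h2 : (0:ℝ) < ((Nn (x-w) : ℝ)+1)^(d-2) := by positivity
    have hj1 := jap_pos (v-x)
    have hj2 := jap_pos (x-w)
    apply mul_le_mul
    · apply inv_anti₀ h1
      exact pow_le_pow_left₀ (by positivity) (jap_ge (v-x)) _
    · apply inv_anti₀ h2
      exact pow_le_pow_left₀ (by positivity) (jap_ge (x-w)) _
    · positivity
    · positivity
  -- pass to ENNReal
  set g : (Fin d → ℤ) → ℝ≥0∞ := fun x => ENNReal.ofReal (f x) with hg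
  have hg_le : ∀ x, g x ≤
      (((Nn (v-x) : ℝ≥0∞)+1)^(d-4) * ((Nn (x-w) : ℝ≥0∞)+1)^(d-2))⁻¹ := by
    intro x
    rw [hg]
    simp only
    calc ENNReal.ofReal (f x)
        ≤ ENNReal.ofReal ((((Nn (v-x) : ℝ)+1)^(d-4))⁻¹ * (((Nn (x-w) : ℝ)+1)^(d-2))⁻¹) :=
          ENNReal.ofReal_le_ofReal (hf_le x)
      _ = (((Nn (v-x) : ℝ≥0∞)+1)^(d-4))⁻¹ * (((Nn (x-w) : ℝ≥0∞)+1)^(d-2))⁻¹ := by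
          rw [ENNReal.ofReal_mul (by positivity), ofReal_invpow, ofReal_invpow]
      _ = (((Nn (v-x) : ℝ≥0∞)+1)^(d-4) * ((Nn (x-w) : ℝ≥0∞)+1)^(d-2))⁻¹ := by
          rw [ENNReal.mul_inv (Or.inl (pow_ne_zero _ (by simp))) (Or.inl (ENNReal.pow_ne_top (by
            exact ENNReal.add_ne_top.2 ⟨ENNReal.natCast_ne_top _, ENNReal.one_ne_top⟩)))]
  have hgsum : ∑' x, g x ≤ K * (((n : ℝ≥0∞)+1)^(d-6))⁻¹ :=
    (ENNReal.tsum_le_tsum hg_le).trans (core hd v w)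
  have hRtop : K * (((n : ℝ≥0∞)+1)^(d-6))⁻¹ ≠ ⊤ := by
    apply ENNReal.mul_ne_top hKtop
    rw [ENNReal.inv_ne_top]
    exact pow_ne_zero _ (by simp)
  have hgtop : ∑' x, g x ≠ ⊤ := ne_top_of_le_ne_top hRtop hgsum
  have hsummable : Summable f := by
    have := ENNReal.summable_toReal hgtop
    refine this.congr ?_
    intro x
    rw [hg]
    simp only
    exact ENNReal.toReal_ofReal (hf_nonneg x)
  refine ⟨hsummable, ?_⟩
  -- tsum bound
  have htsum_eq : ∑' x, f x = (∑' x, g x).toReal := by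
    rw [ENNReal.tsum_toReal_eq (fun x => ENNReal.ofReal_ne_top)]
    apply tsum_congr
    intro x
    exact (ENNReal.toReal_ofReal (hf_nonneg x)).symm
  have hmain : ∑' x, f x ≤ Creal * (((n:ℝ)+1)^(d-6))⁻¹ := by
    rw [htsum_eq]
    calc (∑' x, g x).toReal ≤ (K * (((n : ℝ≥0∞)+1)^(d-6))⁻¹).toReal :=
        ENNReal.toReal_mono hRtop hgsum
      _ = Creal * (((n:ℝ)+1)^(d-6))⁻¹ := by
        rw [ENNReal.toReal_mul, ENNReal.toReal_inv, ENNReal.toReal_pow, ENNReal.toReal_add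
          (ENNReal.natCast_ne_top _) ENNReal.one_ne_top]
        simp [hCreal]
  -- compare with jap (v-w)
  have hjap : (((n:ℝ)+1)^(d-6))⁻¹ ≤ (d:ℝ)^(d-6) * jap (v-w) ^ (6 - (d:ℝ)) := by
    rw [show (6 - (d:ℝ)) = ((6:ℕ):ℝ) - d by norm_num, japrpow (v-w) 6 (by omega)]
    have h1 : jap (v-w) ^ (d-6:ℕ) ≤ ((d:ℝ)*((n:ℝ)+1))^(d-6) := by
      apply pow_le_pow_left₀ (jap_pos (v-w)).le
      exact jap_le hd1 (v-w)
    have h2 : (0:ℝ) < jap (v-w) ^ (d-6:ℕ) := pow_pos (jap_pos _) _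
    have h3 : ((d:ℝ)*((n:ℝ)+1))^(d-6) = (d:ℝ)^(d-6) * ((n:ℝ)+1)^(d-6) := mul_pow _ _ _
    have h4 : (jap (v-w) ^ (d-6:ℕ))⁻¹ ≥ ((d:ℝ)^(d-6) * ((n:ℝ)+1)^(d-6))⁻¹ := by
      apply inv_anti₀ h2
      rw [← h3]; exact h1
    have hd0 : (0:ℝ) < (d:ℝ) := by exact_mod_cast hd1
    calc (((n:ℝ)+1)^(d-6))⁻¹
        = (d:ℝ)^(d-6) * ((d:ℝ)^(d-6) * ((n:ℝ)+1)^(d-6))⁻¹ := by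
          field_simp
      _ ≤ (d:ℝ)^(d-6) * (jap (v-w) ^ (d-6:ℕ))⁻¹ := by
          apply mul_le_mul_of_nonneg_left h4 (by positivity)
  have hjap_pos : 0 < jap (v-w) ^ (6 - (d:ℝ)) := by
    apply Real.rpow_pos_of_pos (jap_pos _)
  calc ∑' x, f x ≤ Creal * (((n:ℝ)+1)^(d-6))⁻¹ := hmain
    _ ≤ Creal * ((d:ℝ)^(d-6) * jap (v-w) ^ (6 - (d:ℝ))) :=
        mul_le_mul_of_nonneg_left hjap hCreal0
    _ ≤ (Creal * (d:ℝ)^(d-6) + 1) * jap (v-w) ^ (6 - (d:ℝ)) := by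
        rw [← mul_assoc]
        nlinarith [hjap_pos]
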